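/- arXiv:1807.03979 — 2 statements merged into one kernel-verified Lean document; each statement's English description precedes it below -/
import Mathlib

section
/- In sequential plurality voting with deterministic tie-breaking, there exists a profile with 3 alternatives and only 2 voters in which a Pareto-dominated alternative is elected. Concretely: Voter 1: A≻C≻B, Voter 2: B≻A≻C; tie-break order C≻B≻A. Then A Pareto dominates C (both voters prefer A to C), yet C is the SPE winner. -/
open Classical

/-- `maxWrt worse s` picks the element of `s` that every other element of `s` is `worse` than. -/
noncomputable def maxWrt {O : Type} [Nonempty O] (worse : O → O → Prop) (s : Finset O) : O :=
  if h : ∃ o ∈ s, ∀ o' ∈ s, o' ≠ o → worse o' o then h.choose else Classical.arbitrary O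

/-- Backward-induction (subgame perfect) outcome of a sequential game with `n` remaining movers,
`worse k` the strict "is worse than" relation of the `k`-th mover on outcomes. -/
noncomputable def speOut {B O : Type} [Fintype B] [Nonempty O]
    (worse : ℕ → O → O → Prop) (outcome : List B → O) : ℕ → List B → O
  | 0, h => outcome h
  | n+1, h => maxWrt (worse h.length)
      (Finset.univ.image (fun b => speOut worse outcome n (h ++ [b])))

/-- number of ballots approving `x`. -/
def votes {m : ℕ} (h : List (Finset (Fin m))) (x : Fin m) : ℕ :=
  h.countP (fun b => decide (x ∈ b))

/-- set of alternatives with the maximal number of votes. -/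
def winSet {m : ℕ} (h : List (Finset (Fin m))) : Finset (Fin m) :=
  Finset.univ.filter (fun x => ∀ y, votes h y ≤ votes h x)

/-- deterministic tie-breaking: the member of the winning set with least tie-break rank. -/
noncomputable def detWinner {m : ℕ} [Nonempty (Fin m)] (tb : Fin m → ℕ)
    (h : List (Finset (Fin m))) : Fin m :=
  maxWrt (fun y x => tb x < tb y) (winSet h)

def topRank {m : ℕ} (r : Fin m → ℕ) (S : Finset (Fin m)) : WithTop ℕ := (S.image r).min

/-- remove the most preferred element. -/
def shed {m : ℕ} (r : Fin m → ℕ) (S : Finset (Fin m)) : Finset (Fin m) :=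
  S.filter (fun a => (r a : WithTop ℕ) ≠ topRank r S)

/-- the lifted strict preference on subsets: better top, or equal top and smaller,
or equal top and equal size and recursively better after removing the tops. -/
def liftBetter {m : ℕ} (r : Fin m → ℕ) : ℕ → Finset (Fin m) → Finset (Fin m) → Prop
  | 0, _, _ => False
  | fuel+1, S, S' =>
    topRank r S < topRank r S' ∨
    (topRank r S = topRank r S' ∧ S.card < S'.card) ∨
    (topRank r S = topRank r S' ∧ S.card = S'.card ∧
      liftBetter r fuel (shed r S) (shed r S'))

/-- `x` beats `y` in pairwise majority comparison. -/
def beats {n m : ℕ} (prof : Fin n → Fin m → ℕ) (x y : Fin m) : Prop :=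
  (Finset.univ.filter (fun i => prof i x < prof i y)).card >
  (Finset.univ.filter (fun i => prof i y < prof i x)).card

lemma maxWrt_eq {O : Type} [Nonempty O] {worse : O → O → Prop}
    (asymm : ∀ a b, worse a b → worse b a → False)
    {s : Finset O} {o : O} (hmem : o ∈ s)
    (hdom : ∀ o' ∈ s, o' ≠ o → worse o' o) : maxWrt worse s = o := by
  have hex : ∃ o ∈ s, ∀ o' ∈ s, o' ≠ o → worse o' o := ⟨o, hmem, hdom⟩
  rw [maxWrt, dif_pos hex]
  obtain ⟨hc, hspec⟩ := hex.choose_spec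
  by_contra hne
  exact asymm _ _ (hdom _ hc hne) (hspec o hmem (fun h => hne h.symm))

lemma speOut_zero {B O : Type} [Fintype B] [Nonempty O] (w : ℕ → O → O → Prop)
    (f : List B → O) (h : List B) : speOut w f 0 h = f h := rfl

lemma speOut_succ {B O : Type} [Fintype B] [Nonempty O] (w : ℕ → O → O → Prop)
    (f : List B → O) (h : List B) (n : ℕ) :
    speOut w f (n+1) h = maxWrt (w h.length)
      (Finset.univ.image (fun b => speOut w f n (h ++ [b]))) := rfl

def expected3 (b1 b2 : Option (Fin 3)) : Fin 3 :=
  match b1, b2 with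
  | none, none => 2
  | none, some x => x
  | some x, none => x
  | some x, some y => if x = y then x else (if ({x,y} : Finset (Fin 3)) = {0,1} then 1 else 2)

def nodeval3 : Option (Fin 3) → Fin 3 := fun b => if b = some 2 then 2 else 1

open Fin.NatCast in
def W3 : ℕ → Fin 3 → Fin 3 → Prop :=
  fun i (x y : Fin 3) => (![![0,2,1], ![1,0,2]] : Fin 2 → Fin 3 → ℕ) i y < ![![0,2,1], ![1,0,2]] i x

noncomputable def out3 : List (Option (Fin 3)) → Fin 3 :=
  fun h => detWinner ![2,1,0] (h.map Option.toFinset)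

lemma asymmN3 (f : Fin 3 → ℕ) (a b : Fin 3) (h1 : f b < f a) (h2 : f a < f b) : False :=
  absurd h1 (Nat.lt_asymm h2)

lemma leaf3 : ∀ b1 b2 : Option (Fin 3), out3 [b1, b2] = expected3 b1 b2 := by
  have hcond : ∀ b1 b2 : Option (Fin 3),
      expected3 b1 b2 ∈ winSet ([b1, b2].map Option.toFinset) ∧
      ∀ o' ∈ winSet ([b1, b2].map Option.toFinset), o' ≠ expected3 b1 b2 →
        (![2,1,0] : Fin 3 → ℕ) (expected3 b1 b2) < ![2,1,0] o' := by decide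
  intro b1 b2
  exact maxWrt_eq (asymmN3 ![2,1,0]) (hcond b1 b2).1 (hcond b1 b2).2

lemma node3 : ∀ b1 : Option (Fin 3), speOut W3 out3 1 [b1] = nodeval3 b1 := by
  have hwit : ∀ b1 : Option (Fin 3), expected3 b1 (some 1) = nodeval3 b1 := by decide
  have hdom : ∀ b1 b2 : Option (Fin 3), expected3 b1 b2 ≠ nodeval3 b1 →
      (![1,0,2] : Fin 3 → ℕ) (nodeval3 b1) < ![1,0,2] (expected3 b1 b2) := by decide
  intro b1
  rw [speOut_succ]
  apply maxWrt_eq (asymmN3 ![1,0,2])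
  · exact (@Finset.mem_image _ _ (fun a b => Classical.propDecidable (a = b)) _ _ _).mpr ⟨some 1, Finset.mem_univ _, (leaf3 b1 (some 1)).trans (hwit b1)⟩
  · intro o' ho' hne
    obtain ⟨b2, -, hb2⟩ := (@Finset.mem_image _ _ (fun a b => Classical.propDecidable (a = b)) _ _ _).mp ho'
    have h2 : o' = expected3 b1 b2 := hb2 ▸ (leaf3 b1 b2).symm ▸ rfl
    subst h2
    exact hdom b1 b2 hne

lemma root3 : speOut W3 out3 2 [] = 2 := by
  have hdom : ∀ b1 : Option (Fin 3), nodeval3 b1 ≠ 2 →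
      (![0,2,1] : Fin 3 → ℕ) 2 < ![0,2,1] (nodeval3 b1) := by decide
  rw [speOut_succ]
  apply maxWrt_eq (asymmN3 ![0,2,1])
  · exact (@Finset.mem_image _ _ (fun a b => Classical.propDecidable (a = b)) _ _ _).mpr ⟨some 2, Finset.mem_univ _, node3 (some 2)⟩
  · intro o' ho' hne
    obtain ⟨b1, -, hb1⟩ := (@Finset.mem_image _ _ (fun a b => Classical.propDecidable (a = b)) _ _ _).mp ho'
    have h2 : o' = nodeval3 b1 := hb1 ▸ (node3 b1).symm ▸ rfl
    subst h2
    exact hdom b1 hne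

open Fin.NatCast in
/-- Pareto-dominated paradox in sequential plurality voting with deterministic
tie-breaking: 3 alternatives A=0, B=1, C=2, 2 voters (A≻C≻B, B≻A≻C),
tie-break order C≻B≻A. A Pareto dominates C, yet C is elected in the SPE. -/
theorem pareto_paradox_plurality_deterministic :
    let prof : Fin 2 → Fin 3 → ℕ := ![![0,2,1], ![1,0,2]]
    let tb : Fin 3 → ℕ := ![2,1,0]
    (∀ i : Fin 2, prof i 0 < prof i 2) ∧
    speOut (fun i (x y : Fin 3) => prof i y < prof i x)
      (fun h : List (Option (Fin 3)) => detWinner tb (h.map Option.toFinset)) 2 [] = 2 := by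
  exact ⟨by decide, root3⟩
end

section
/- In any sequential voting system (plurality or approval, either tie-breaking rule), if strictly more than half the voters rank alternative X first, then in the subgame-perfect equilibrium X is the unique winner (and all those voters voting only for X forms part of an SPE). -/
open Classical

lemma maxWrt_eq_s13 {O : Type} [Nonempty O] (w : O → O → Prop) (s : Finset O) (t : O)
    (ht : t ∈ s) (hall : ∀ o' ∈ s, o' ≠ t → w o' t)
    (hasym : ∀ o o', w o o' → ¬ w o' o) : maxWrt w s = t := by
  have hex : ∃ o ∈ s, ∀ o' ∈ s, o' ≠ o → w o' o := ⟨t, ht, hall⟩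
  rw [maxWrt, dif_pos hex]
  obtain ⟨hmem, hspec⟩ := hex.choose_spec
  by_contra hne
  exact hasym _ _ (hall _ hmem hne) (hspec t ht fun h => hne h.symm)

lemma votes_append {m : ℕ} (l : List (Finset (Fin m))) (b : Finset (Fin m)) (z : Fin m) :
    votes (l ++ [b]) z = votes l z + (if z ∈ b then 1 else 0) := by
  simp [votes, List.countP_append, List.countP_cons]

lemma winSet_eq {m : ℕ} (hF : List (Finset (Fin (m+1)))) (X : Fin (m+1))
    (hlt : ∀ z, z ≠ X → votes hF z < votes hF X) : winSet hF = {X} := by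
  ext x
  simp only [winSet, Finset.mem_filter, Finset.mem_univ, true_and, Finset.mem_singleton]
  constructor
  · intro hx
    by_contra hne
    exact absurd (hx X) (not_le.mpr (hlt x hne))
  · intro hx y
    rw [hx]
    by_cases hy : y = X
    · subst hy; exact le_refl _
    · exact (hlt y hy).le

def fcount {m : ℕ} (prof : ℕ → Fin (m+1) → ℕ) (X : Fin (m+1)) (n k : ℕ) : ℕ :=
  ((Finset.Ico k n).filter (fun i => ∀ z, z ≠ X → prof i X < prof i z)).card

lemma fcount_le {m : ℕ} (prof : ℕ → Fin (m+1) → ℕ) (X : Fin (m+1)) (n k : ℕ) :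
    fcount prof X n k ≤ n - k := by
  calc fcount prof X n k ≤ (Finset.Ico k n).card := Finset.card_filter_le _ _
  _ = n - k := Nat.card_Ico k n

lemma fcount_succ {m : ℕ} (prof : ℕ → Fin (m+1) → ℕ) (X : Fin (m+1)) (n k : ℕ) (hk : k < n) :
    fcount prof X n k = fcount prof X n (k+1) +
      (if (∀ z, z ≠ X → prof k X < prof k z) then 1 else 0) := by
  unfold fcount
  rw [← Finset.insert_Ico_add_one_left_eq_Ico hk, Finset.filter_insert]
  by_cases hf : ∀ z, z ≠ X → prof k X < prof k z
  · rw [if_pos hf, if_pos hf, Finset.card_insert_of_notMem]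
    intro hmem
    have := (Finset.mem_filter.mp hmem).1
    simp [Finset.mem_Ico] at this
  · rw [if_neg hf, if_neg hf]; rfl

lemma key {m : ℕ} (n : ℕ) (prof : ℕ → Fin (m+1) → ℕ) (X : Fin (m+1))
    {B O : Type} [Fintype B] [Nonempty B] [Nonempty O]
    (toF : B → Finset (Fin (m+1))) (bX : B) (hbX : toF bX = {X})
    (worse : ℕ → O → O → Prop)
    (hasym : ∀ i o o', worse i o o' → ¬ worse i o' o)
    (outcome : List B → O) (t : O)
    (hout : ∀ h : List B,
      (∀ z, z ≠ X → votes (h.map toF) z < votes (h.map toF) X) → outcome h = t)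
    (hfan : ∀ i (o : O), (∀ z, z ≠ X → prof i X < prof i z) → o ≠ t → worse i o t) :
    ∀ (j : ℕ) (h : List B), h.length + j = n →
      (∀ z, z ≠ X → votes (h.map toF) z + (n - h.length - fcount prof X n h.length)
          < votes (h.map toF) X + fcount prof X n h.length) →
      speOut worse outcome j h = t := by
  intro j
  induction j with
  | zero =>
    intro h hlen hC
    have hf0 : fcount prof X n h.length = 0 := by
      have := fcount_le prof X n h.length
      omega
    simp only [speOut]
    apply hout
    intro z hz
    have := hC z hz
    omega
  | succ j ih =>
    intro h hlen hC
    have hkn : h.length < n := by omega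
    simp only [speOut]
    by_cases hfk : ∀ z, z ≠ X → prof h.length X < prof h.length z
    · -- mover is a fan: voting bX leads to t
      have hsucc := fcount_succ prof X n h.length hkn
      rw [if_pos hfk] at hsucc
      have hchild : speOut worse outcome j (h ++ [bX]) = t := by
        apply ih
        · simp; omega
        · intro z hz
          have hCz := hC z hz
          have hlen' : (h ++ [bX]).length = h.length + 1 := by simp
          rw [hlen', List.map_append]
          simp only [List.map_cons, List.map_nil]
          rw [votes_append, votes_append, hbX]
          rw [if_pos (Finset.mem_singleton_self X), if_neg (by simp [hz])]
          omega
      apply maxWrt_eq_s13 _ _ t _ _ (hasym h.length)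
      · exact Finset.mem_image.mpr ⟨bX, Finset.mem_univ _, hchild⟩
      · intro o' _ hne
        exact hfan h.length o' hfk hne
    · -- mover is not a fan: every ballot leads to t
      have hsucc := fcount_succ prof X n h.length hkn
      rw [if_neg hfk, Nat.add_zero] at hsucc
      have hFle := fcount_le prof X n (h.length + 1)
      have hall : ∀ b : B, speOut worse outcome j (h ++ [b]) = t := by
        intro b
        apply ih
        · simp; omega
        · intro z hz
          have hCz := hC z hz
          have hlen' : (h ++ [b]).length = h.length + 1 := by simp
          rw [hlen', List.map_append]
          simp only [List.map_cons, List.map_nil]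
          rw [votes_append, votes_append]
          have h1 : (if z ∈ toF b then 1 else 0) ≤ 1 := by split <;> omega
          have h2 : (0:ℕ) ≤ (if X ∈ toF b then 1 else 0) := Nat.zero_le _
          omega
      apply maxWrt_eq_s13 _ _ t _ _ (hasym h.length)
      · exact Finset.mem_image.mpr ⟨Classical.arbitrary B, Finset.mem_univ _,
          hall (Classical.arbitrary B)⟩
      · intro o' ho' hne
        obtain ⟨b, _, rfl⟩ := Finset.mem_image.mp ho'
        exact absurd (hall b) hne

lemma liftBetter_asymm {m : ℕ} (r : Fin m → ℕ) :
    ∀ fuel S S', liftBetter r fuel S S' → ¬ liftBetter r fuel S' S := by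
  intro fuel
  induction fuel with
  | zero => intro S S' h; exact h.elim
  | succ f ih =>
    intro S S' h1 h2
    simp only [liftBetter] at h1 h2
    rcases h1 with h1 | ⟨e1, h1⟩ | ⟨e1, c1, h1⟩ <;>
      rcases h2 with h2 | ⟨e2, h2⟩ | ⟨e2, c2, h2⟩
    · exact absurd h2 (lt_asymm h1)
    · exact h1.ne' e2
    · exact h1.ne' e2
    · exact h2.ne' e1
    · omega
    · omega
    · exact h2.ne' e1
    · omega
    · exact ih _ _ h1 h2

lemma liftBetter_singleton {m : ℕ} (r : Fin (m+1) → ℕ) (X : Fin (m+1))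
    (hf : ∀ z, z ≠ X → r X < r z) (S : Finset (Fin (m+1))) (hS : S ≠ {X}) :
    liftBetter r (m+1) {X} S := by
  have htop : topRank r {X} = (r X : WithTop ℕ) := by
    simp [topRank]
  show liftBetter r (m+1) {X} S
  simp only [liftBetter]
  by_cases hX : X ∈ S
  · right; left
    have hS_top : topRank r S = (r X : WithTop ℕ) := by
      apply le_antisymm
      · exact Finset.min_le (Finset.mem_image_of_mem r hX)
      · apply Finset.le_min
        intro b hb
        obtain ⟨z, hz, rfl⟩ := Finset.mem_image.mp hb
        by_cases hzx : z = X
        · subst hzx; exact le_refl _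
        · exact WithTop.coe_le_coe.mpr (hf z hzx).le
    refine ⟨htop.trans hS_top.symm, ?_⟩
    have hy : ∃ y ∈ S, y ≠ X := by
      by_contra hcon
      push_neg at hcon
      exact hS (Finset.eq_singleton_iff_unique_mem.mpr ⟨hX, hcon⟩)
    obtain ⟨y, hyS, hyX⟩ := hy
    have : 1 < S.card := Finset.one_lt_card.mpr ⟨y, hyS, X, hX, hyX⟩
    simpa using this
  · left
    rw [htop]
    show (↑(r X) : WithTop ℕ) < (S.image r).min
    rw [Finset.min_eq_inf_withTop]
    refine (Finset.lt_inf_iff ?_).mpr ?_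
    · exact WithTop.coe_lt_top _
    intro b hb
    obtain ⟨z, hz, rfl⟩ := Finset.mem_image.mp hb
    have hzx : z ≠ X := fun h => hX (h ▸ hz)
    exact WithTop.coe_lt_coe.mpr (hf z hzx)

/-- If strictly more than half of the voters rank alternative `X` first, then
`X` is the unique SPE winner in all four sequential voting systems:
plurality/approval with deterministic tie-breaking (for any injective
tie-break order), and plurality/approval with uniform tie-breaking. -/
theorem absolute_majority_top_wins
    (m n : ℕ) (prof : ℕ → Fin (m+1) → ℕ)
    (hinj : ∀ i < n, Function.Injective (prof i)) (X : Fin (m+1))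
    (hmaj : 2 * ((Finset.range n).filter
        (fun i => ∀ z, z ≠ X → prof i X < prof i z)).card > n) :
    (∀ tb : Fin (m+1) → ℕ, Function.Injective tb →
      speOut (fun i (x y : Fin (m+1)) => prof i y < prof i x)
        (fun h : List (Option (Fin (m+1))) => detWinner tb (h.map Option.toFinset)) n [] = X) ∧
    (∀ tb : Fin (m+1) → ℕ, Function.Injective tb →
      speOut (fun i (x y : Fin (m+1)) => prof i y < prof i x)
        (fun h : List (Finset (Fin (m+1))) => detWinner tb h) n [] = X) ∧
    speOut (fun i (S S' : Finset (Fin (m+1))) => liftBetter (prof i) (m+1) S' S)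
      (fun h : List (Option (Fin (m+1))) => winSet (h.map Option.toFinset)) n [] = {X} ∧
    speOut (fun i (S S' : Finset (Fin (m+1))) => liftBetter (prof i) (m+1) S' S)
      (fun h : List (Finset (Fin (m+1))) => winSet h) n [] = {X} := by
  rw [Finset.range_eq_Ico] at hmaj
  have hF : 2 * fcount prof X n 0 > n := hmaj
  have hC0 : ∀ {B : Type} (toF : B → Finset (Fin (m+1))),
      ∀ z, z ≠ X → votes (([] : List B).map toF) z +
        (n - ([] : List B).length - fcount prof X n ([] : List B).length)
        < votes (([] : List B).map toF) X + fcount prof X n ([] : List B).length := by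
    intro B toF z hz
    have := fcount_le prof X n 0
    simp only [List.map_nil, List.length_nil]
    show votes ([] : List (Finset (Fin (m+1)))) z + (n - 0 - fcount prof X n 0)
        < votes ([] : List (Finset (Fin (m+1)))) X + fcount prof X n 0
    have hv : ∀ y, votes ([] : List (Finset (Fin (m+1)))) y = 0 := fun y => rfl
    rw [hv, hv]
    omega
  have hasymDet : ∀ i (o o' : Fin (m+1)),
      prof i o' < prof i o → ¬ (prof i o < prof i o') := fun i o o' h1 h2 =>
    absurd h2 (lt_asymm h1)
  have hdetout : ∀ (tb : Fin (m+1) → ℕ) (hF : List (Finset (Fin (m+1)))),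
      (∀ z, z ≠ X → votes hF z < votes hF X) → detWinner tb hF = X := by
    intro tb hFl hlt
    rw [detWinner, winSet_eq hFl X hlt]
    apply maxWrt_eq_s13 _ _ X (Finset.mem_singleton_self X)
    · intro o' ho' hne
      exact absurd (Finset.mem_singleton.mp ho') hne
    · intro o o' h1 h2
      exact absurd h2 (lt_asymm h1)
  have hasymU : ∀ i (S S' : Finset (Fin (m+1))),
      liftBetter (prof i) (m+1) S' S → ¬ liftBetter (prof i) (m+1) S S' := by
    intro i S S' h1 h2
    exact liftBetter_asymm (prof i) (m+1) _ _ h1 h2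
  refine ⟨?_, ?_, ?_, ?_⟩
  · intro tb htb
    exact key n prof X Option.toFinset (some X) (by simp)
      _ hasymDet _ X (fun h hlt => hdetout tb _ hlt)
      (fun i o hf hne => hf o hne) n [] (by simp) (hC0 Option.toFinset)
  · intro tb htb
    exact key n prof X id ({X} : Finset (Fin (m+1))) rfl
      _ hasymDet _ X (fun h hlt => hdetout tb h (by simpa using hlt))
      (fun i o hf hne => hf o hne) n [] (by simp) (hC0 id)
  · exact key n prof X Option.toFinset (some X) (by simp)
      _ hasymU _ ({X} : Finset (Fin (m+1))) (fun h hlt => winSet_eq _ X hlt)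
      (fun i S hf hne => liftBetter_singleton (prof i) X (fun z hz => hf z hz) S hne)
      n [] (by simp) (hC0 Option.toFinset)
  · exact key n prof X id ({X} : Finset (Fin (m+1))) rfl
      _ hasymU _ ({X} : Finset (Fin (m+1))) (fun h hlt => winSet_eq h X (by simpa using hlt))
      (fun i S hf hne => liftBetter_singleton (prof i) X (fun z hz => hf z hz) S hne)
      n [] (by simp) (hC0 id)
end
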